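/- The natural inclusion S(∞)^{n+1} → 𝔾 induces a bijection of double coset spaces K(α) \ S(∞)^{n+1} / K(β) ≅ 𝕂(α) \ 𝔾 / 𝕂(β). -/

import Mathlib

/-- The subgroup `S(∞)` of finitely supported permutations of `ℕ`
inside the group `S̄(∞)` of all permutations of `ℕ`. -/
def finSupp : Subgroup (Equiv.Perm ℕ) where
  carrier := {g | {n | g n ≠ n}.Finite}
  one_mem' := by simp
  mul_mem' := by
    intro a b ha hb
    refine (Set.Finite.union ha hb).subset fun n hn => ?_
    simp only [Set.mem_setOf_eq, Equiv.Perm.mul_apply] at hn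
    by_cases h : b n = n
    · exact Or.inl (by simpa [h] using hn)
    · exact Or.inr h
  inv_mem' := by
    intro a ha
    refine ha.subset fun n hn => ?_
    simp only [Set.mem_setOf_eq] at hn ⊢
    intro h
    apply hn
    have h2 := congrArg (fun x => a⁻¹ x) h
    simpa using h2.symm

/-- The group `𝔾` of tuples `(g₁, …, g_{n+1})` of permutations of `ℕ` with
`gᵢ gⱼ⁻¹` finitely supported for all `i, j`. -/
def bbG (n : ℕ) : Subgroup (Fin (n + 1) → Equiv.Perm ℕ) where
  carrier := {g | ∀ i j, g i * (g j)⁻¹ ∈ finSupp}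
  one_mem' := by intro i j; simpa using finSupp.one_mem
  mul_mem' := by
    intro a b ha hb i j
    have key : (a * b) i * ((a * b) j)⁻¹
        = (a i * (b i * (b j)⁻¹) * (a i)⁻¹) * (a i * (a j)⁻¹) := by
      simp [Pi.mul_apply, mul_assoc]
    rw [key]
    have hn : Subgroup.Normal finSupp := by
      constructor
      intro x hx k
      refine (hx.image k).subset fun n hn => ?_
      simp only [Set.mem_setOf_eq, Equiv.Perm.mul_apply] at hn
      refine ⟨k⁻¹ n, ?_, by simp⟩
      intro h
      apply hn
      rw [h]
      simp
    exact mul_mem (hn.conj_mem _ (hb i j) (a i)) (ha i j)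
  inv_mem' := by
    intro a ha i j
    have key : (a⁻¹) i * ((a⁻¹) j)⁻¹ = (a i)⁻¹ * (a j * (a i)⁻¹) * ((a i)⁻¹)⁻¹ := by
      simp [mul_assoc]
    rw [key]
    have hn : Subgroup.Normal finSupp := by
      constructor
      intro x hx k
      refine (hx.image k).subset fun n hn => ?_
      simp only [Set.mem_setOf_eq, Equiv.Perm.mul_apply] at hn
      refine ⟨k⁻¹ n, ?_, by simp⟩
      intro h
      apply hn
      rw [h]
      simp
    exact hn.conj_mem _ (ha j i) _

/-- `S(∞)^{n+1}` as a subgroup of `S̄(∞)^{n+1}`. -/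
def Gfin (n : ℕ) : Subgroup (Fin (n + 1) → Equiv.Perm ℕ) :=
  Subgroup.pi Set.univ fun _ => finSupp

/-- The diagonal subgroup `𝕂 = {(g, g, …, g) : g ∈ S̄(∞)}` of `S̄(∞)^{n+1}`. -/
def diagSub (n : ℕ) : Subgroup (Fin (n + 1) → Equiv.Perm ℕ) where
  carrier := {g | ∀ i j, g i = g j}
  one_mem' := fun _ _ => rfl
  mul_mem' := by
    intro a b ha hb i j
    simp [Pi.mul_apply, ha i j, hb i j]
  inv_mem' := by
    intro a ha i j
    simp [Pi.inv_apply, ha i j]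

/-- The subgroup of permutations of `ℕ` fixing the points `1, …, α`. -/
def fixSub (α : ℕ) : Subgroup (Equiv.Perm ℕ) where
  carrier := {g | ∀ m, 1 ≤ m → m ≤ α → g m = m}
  one_mem' := by intro m _ _; rfl
  mul_mem' := by
    intro a b ha hb m h1 h2
    simp only [Equiv.Perm.mul_apply]
    rw [hb m h1 h2, ha m h1 h2]
  inv_mem' := by
    intro a ha m h1 h2
    have h := ha m h1 h2
    have h2 := congrArg (fun x => a⁻¹ x) h
    simpa using h2.symm

/-- The diagonal subgroup `𝕂(α)` of tuples `(h, …, h)` with `h ∈ S̄(∞)` fixing `1, …, α`. -/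
def diagFix (n α : ℕ) : Subgroup (Fin (n + 1) → Equiv.Perm ℕ) where
  carrier := {g | (∀ i, g i ∈ fixSub α) ∧ ∀ i j, g i = g j}
  one_mem' := ⟨fun _ => one_mem _, fun _ _ => rfl⟩
  mul_mem' := by
    rintro a b ⟨ha1, ha2⟩ ⟨hb1, hb2⟩
    exact ⟨fun i => mul_mem (ha1 i) (hb1 i),
      fun i j => by simp [Pi.mul_apply, ha2 i j, hb2 i j]⟩
  inv_mem' := by
    rintro a ⟨h1, h2⟩
    exact ⟨fun i => inv_mem (h1 i), fun i j => by simp [Pi.inv_apply, h2 i j]⟩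

theorem Gfin_le_bbG (n : ℕ) : Gfin n ≤ bbG n := by
  intro g hg i j
  have h := (Subgroup.mem_pi Set.univ).mp hg
  exact mul_mem (h i (Set.mem_univ i)) (inv_mem (h j (Set.mem_univ j)))


theorem perm_inv_apply_self {X : Type*} (f : Equiv.Perm X) (x : X) : f⁻¹ (f x) = x :=
  f.symm_apply_apply x

theorem perm_apply_inv_self {X : Type*} (f : Equiv.Perm X) (x : X) : f (f⁻¹ x) = x :=
  f.apply_symm_apply x

/-- Any permutation agrees with some finitely supported permutation on a given finite set. -/
lemma exists_finSupp_agree (u : Equiv.Perm ℕ) (A : Finset ℕ) :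
    ∃ s : Equiv.Perm ℕ, s ∈ finSupp ∧ ∀ x ∈ A, s x = u x := by
  induction A using Finset.induction_on with
  | empty => exact ⟨1, one_mem _, by simp⟩
  | @insert a A ha ih =>
    obtain ⟨s, hs, hsA⟩ := ih
    have hswap : Equiv.swap (u a) (s a) ∈ finSupp := by
      refine Set.Finite.subset ((Set.finite_singleton (s a)).insert (u a))
        fun m hm => ?_
      simp only [Set.mem_setOf_eq] at hm
      by_contra hc
      simp only [Set.mem_insert_iff, Set.mem_singleton_iff, not_or] at hc
      exact hm (Equiv.swap_apply_of_ne_of_ne hc.1 hc.2)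
    refine ⟨Equiv.swap (u a) (s a) * s, mul_mem hswap hs, ?_⟩
    intro x hx
    rcases Finset.mem_insert.mp hx with rfl | hx
    · simp [Equiv.Perm.mul_apply, Equiv.swap_apply_right]
    · have h1 : s x = u x := hsA x hx
      have hxa : x ≠ a := fun h => ha (h ▸ hx)
      have h2 : u x ≠ u a := fun h => hxa (u.injective h)
      have h3 : u x ≠ s a := fun h => hxa (s.injective (h1.trans h))
      simp [Equiv.Perm.mul_apply, h1, Equiv.swap_apply_of_ne_of_ne h2 h3]

/-- Key lemma: if two tuples of finitely supported permutations are related by a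
diagonal pair `(u, v)` of arbitrary permutations fixing `1..α` resp. `1..β`, then they
are related by a pair of *finitely supported* such permutations. -/
lemma key_conj {n α β : ℕ} (a b : Fin (n + 1) → Equiv.Perm ℕ)
    (hafin : ∀ i, a i ∈ finSupp) (hbfin : ∀ i, b i ∈ finSupp) (u v : Equiv.Perm ℕ)
    (hu : u ∈ fixSub α) (hv : v ∈ fixSub β)
    (hab : ∀ i, b i = u * a i * v) :
    ∃ s t : Equiv.Perm ℕ, s ∈ finSupp ∧ s ∈ fixSub α ∧ t ∈ finSupp ∧ t ∈ fixSub β ∧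
      ∀ i, b i = s * a i * t := by
  set c : Fin (n + 1) → Equiv.Perm ℕ := fun i => a i * (a 0)⁻¹ with hc_def
  have hcfin : ∀ i, {m | c i m ≠ m}.Finite := fun i => mul_mem (hafin i) (inv_mem (hafin 0))
  set A : Finset ℕ := (Finset.Icc 1 α ∪ (Finset.Icc 1 β).image (a 0)) ∪
      Finset.univ.biUnion (fun i => (hcfin i).toFinset) with hA_def
  have hsuppA : ∀ i x, c i x ≠ x → x ∈ A := by
    intro i x hx
    refine Finset.mem_union_right _ (Finset.mem_biUnion.mpr ⟨i, Finset.mem_univ i, ?_⟩)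
    simpa using hx
  obtain ⟨s, hsfin, hsA⟩ := exists_finSupp_agree u A
  -- s fixes 1..α
  have hsfix : s ∈ fixSub α := by
    intro m h1 h2
    have hmA : m ∈ A := Finset.mem_union_left _
      (Finset.mem_union_left _ (Finset.mem_Icc.mpr ⟨h1, h2⟩))
    rw [hsA m hmA]
    exact hu m h1 h2
  -- s (a 0 m) = b 0 m for 1 ≤ m ≤ β
  have hsb : ∀ m, 1 ≤ m → m ≤ β → s (a 0 m) = b 0 m := by
    intro m h1 h2
    have hmA : a 0 m ∈ A := Finset.mem_union_left _
      (Finset.mem_union_right _ (Finset.mem_image.mpr ⟨m, Finset.mem_Icc.mpr ⟨h1, h2⟩, rfl⟩))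
    rw [hsA _ hmA, hab 0]
    simp [Equiv.Perm.mul_apply, hv m h1 h2]
  set t : Equiv.Perm ℕ := (a 0)⁻¹ * (s⁻¹ * b 0) with ht_def
  have htfin : t ∈ finSupp :=
    mul_mem (inv_mem (hafin 0)) (mul_mem (inv_mem hsfin) (hbfin 0))
  have htfix : t ∈ fixSub β := by
    intro m h1 h2
    have h3 : s⁻¹ (b 0 m) = a 0 m := by
      rw [← hsb m h1 h2]
      exact perm_inv_apply_self s (a 0 m)
    simp only [ht_def, Equiv.Perm.mul_apply, h3, perm_inv_apply_self]
  -- the conjugation identity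
  have hconj : ∀ i, s * c i * s⁻¹ = u * c i * u⁻¹ := by
    intro i
    have hpt : ∀ x, s (c i x) = (u * c i * u⁻¹) (s x) := by
      intro x
      by_cases hxA : x ∈ A
      · have hsx : s x = u x := hsA x hxA
        simp only [Equiv.Perm.mul_apply, hsx, perm_inv_apply_self]
        by_cases hcx : c i x = x
        · rw [hcx, hsx]
        · have hcxA : c i x ∈ A := by
            refine hsuppA i (c i x) ?_
            intro h
            exact hcx ((c i).injective h)
          rw [hsA _ hcxA]
      · have hcx : c i x = x := by
          by_contra h
          exact hxA (hsuppA i x h)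
        have hy : c i (u⁻¹ (s x)) = u⁻¹ (s x) := by
          by_contra h
          have hyA : u⁻¹ (s x) ∈ A := hsuppA i _ h
          have : s (u⁻¹ (s x)) = u (u⁻¹ (s x)) := hsA _ hyA
          rw [perm_apply_inv_self] at this
          have : u⁻¹ (s x) = x := s.injective this
          rw [this] at hyA
          exact hxA hyA
        simp only [Equiv.Perm.mul_apply, hcx, hy, perm_apply_inv_self]
    ext y
    have := hpt (s⁻¹ y)
    simpa [Equiv.Perm.mul_apply, perm_apply_inv_self] using this
  refine ⟨s, t, hsfin, hsfix, htfin, htfix, fun i => ?_⟩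
  have hci := hconj i
  calc b i = u * a i * v := hab i
    _ = (u * (a i * (a 0)⁻¹) * u⁻¹) * (u * a 0 * v) := by group
    _ = (s * (a i * (a 0)⁻¹) * s⁻¹) * (u * a 0 * v) := by rw [← hci]
    _ = (s * (a i * (a 0)⁻¹) * s⁻¹) * b 0 := by rw [← hab 0]
    _ = s * a i * ((a 0)⁻¹ * (s⁻¹ * b 0)) := by group

/-- The natural inclusion `S(∞)^{n+1} → 𝔾` induces a bijection of
double coset spaces `K(α) \ S(∞)^{n+1} / K(β) ≅ 𝕂(α) \ 𝔾 / 𝕂(β)`, where `K(α)`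
(resp. `𝕂(α)`) is the diagonal subgroup of elements fixing `1, …, α`. -/
theorem doset_bijection (n α β : ℕ) :
    ∃ F : DoubleCoset.Quotient (((diagFix n α).subgroupOf (Gfin n)) : Set (Gfin n))
            (((diagFix n β).subgroupOf (Gfin n)) : Set (Gfin n)) ≃
          DoubleCoset.Quotient (((diagFix n α).subgroupOf (bbG n)) : Set (bbG n))
            (((diagFix n β).subgroupOf (bbG n)) : Set (bbG n)),
      ∀ g : Gfin n,
        F (DoubleCoset.mk _ _ g) = DoubleCoset.mk _ _ (Subgroup.inclusion (Gfin_le_bbG n) g) := by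
  classical
  -- the inclusion map on quotients
  have sound : ∀ x y : ↥(Gfin n),
      DoubleCoset.setoid (((diagFix n α).subgroupOf (Gfin n)) : Set (Gfin n))
        (((diagFix n β).subgroupOf (Gfin n)) : Set (Gfin n)) x y →
      DoubleCoset.setoid (((diagFix n α).subgroupOf (bbG n)) : Set (bbG n))
        (((diagFix n β).subgroupOf (bbG n)) : Set (bbG n))
        (Subgroup.inclusion (Gfin_le_bbG n) x) (Subgroup.inclusion (Gfin_le_bbG n) y) := by
    intro x y hxy
    rw [DoubleCoset.rel_iff] at hxy ⊢
    obtain ⟨h, hh, k, hk, rfl⟩ := hxy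
    exact ⟨Subgroup.inclusion (Gfin_le_bbG n) h, by
        rwa [Subgroup.mem_subgroupOf] at hh ⊢,
      Subgroup.inclusion (Gfin_le_bbG n) k, by
        rwa [Subgroup.mem_subgroupOf] at hk ⊢, by
        simp [Subgroup.inclusion, Subtype.ext_iff]⟩
  set F₀ : DoubleCoset.Quotient (((diagFix n α).subgroupOf (Gfin n)) : Set (Gfin n))
      (((diagFix n β).subgroupOf (Gfin n)) : Set (Gfin n)) →
      DoubleCoset.Quotient (((diagFix n α).subgroupOf (bbG n)) : Set (bbG n))
      (((diagFix n β).subgroupOf (bbG n)) : Set (bbG n)) :=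
    Quotient.map' (Subgroup.inclusion (Gfin_le_bbG n)) sound with hF₀
  have hF₀mk : ∀ g : Gfin n, F₀ (DoubleCoset.mk _ _ g)
      = DoubleCoset.mk _ _ (Subgroup.inclusion (Gfin_le_bbG n) g) := fun g => rfl
  have hinj : Function.Injective F₀ := by
    intro q₁ q₂
    induction q₁ using Quotient.inductionOn' with
    | h x =>
    induction q₂ using Quotient.inductionOn' with
    | h y =>
    intro hq
    have hq' := (DoubleCoset.eq _ _ _ _).mp hq
    obtain ⟨h, hh, k, hk, heq⟩ := hq'
    rw [Subgroup.mem_subgroupOf] at hh hk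
    obtain ⟨hhfix, hhdiag⟩ := hh
    obtain ⟨hkfix, hkdiag⟩ := hk
    set u : Equiv.Perm ℕ := (h : Fin (n + 1) → Equiv.Perm ℕ) 0 with hu_def
    set v : Equiv.Perm ℕ := (k : Fin (n + 1) → Equiv.Perm ℕ) 0 with hv_def
    have hxfin : ∀ i, (x : Fin (n + 1) → Equiv.Perm ℕ) i ∈ finSupp := fun i =>
      (Subgroup.mem_pi Set.univ).mp x.2 i (Set.mem_univ i)
    have hyfin : ∀ i, (y : Fin (n + 1) → Equiv.Perm ℕ) i ∈ finSupp := fun i =>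
      (Subgroup.mem_pi Set.univ).mp y.2 i (Set.mem_univ i)
    have hab : ∀ i, (y : Fin (n + 1) → Equiv.Perm ℕ) i
        = u * (x : Fin (n + 1) → Equiv.Perm ℕ) i * v := by
      intro i
      have := congrArg (fun z => (((z : ↥(bbG n)) : Fin (n + 1) → Equiv.Perm ℕ)) i) heq
      simp only [Subgroup.coe_mul, Pi.mul_apply] at this
      rw [hhdiag i 0, hkdiag i 0] at this
      exact this
    obtain ⟨s, t, hsfin, hsfix, htfin, htfix, hst⟩ :=
      key_conj _ _ hxfin hyfin u v (hhfix 0) (hkfix 0) hab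
    apply (DoubleCoset.eq _ _ _ _).mpr
    refine ⟨⟨fun _ => s, (Subgroup.mem_pi Set.univ).mpr fun _ _ => hsfin⟩, ?_,
      ⟨fun _ => t, (Subgroup.mem_pi Set.univ).mpr fun _ _ => htfin⟩, ?_, ?_⟩
    · rw [Subgroup.mem_subgroupOf]
      exact ⟨fun _ => hsfix, fun _ _ => rfl⟩
    · rw [Subgroup.mem_subgroupOf]
      exact ⟨fun _ => htfix, fun _ _ => rfl⟩
    · apply Subtype.ext
      funext i
      exact hst i
  have hsurj : Function.Surjective F₀ := by
    intro q
    induction q using Quotient.inductionOn' with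
    | h g =>
    obtain ⟨s, hsfin, hsA⟩ := exists_finSupp_agree
      ((g : Fin (n + 1) → Equiv.Perm ℕ) 0) (Finset.Icc 1 β)
    set w : Equiv.Perm ℕ := ((g : Fin (n + 1) → Equiv.Perm ℕ) 0)⁻¹ * s with hw_def
    have hwfix : w ∈ fixSub β := by
      intro m h1 h2
      have := hsA m (Finset.mem_Icc.mpr ⟨h1, h2⟩)
      simp only [hw_def, Equiv.Perm.mul_apply, this, perm_inv_apply_self]
    have hgw : ∀ i, (g : Fin (n + 1) → Equiv.Perm ℕ) i * w ∈ finSupp := by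
      intro i
      have h1 : (g : Fin (n + 1) → Equiv.Perm ℕ) i
          * ((g : Fin (n + 1) → Equiv.Perm ℕ) 0)⁻¹ ∈ finSupp := g.2 i 0
      have : (g : Fin (n + 1) → Equiv.Perm ℕ) i * w
          = ((g : Fin (n + 1) → Equiv.Perm ℕ) i
            * ((g : Fin (n + 1) → Equiv.Perm ℕ) 0)⁻¹) * s := by
        rw [hw_def]; group
      rw [this]
      exact mul_mem h1 hsfin
    refine ⟨DoubleCoset.mk _ _ ⟨fun i => (g : Fin (n + 1) → Equiv.Perm ℕ) i * w,
      (Subgroup.mem_pi Set.univ).mpr fun i _ => hgw i⟩, ?_⟩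
    rw [hF₀mk]
    symm
    apply (DoubleCoset.eq _ _ _ _).mpr
    have hwG : (fun _ : Fin (n + 1) => w) ∈ bbG n := by
      intro i j
      simpa using finSupp.one_mem
    refine ⟨1, one_mem _, ⟨fun _ => w, hwG⟩, ?_, ?_⟩
    · rw [Subgroup.mem_subgroupOf]
      exact ⟨fun _ => hwfix, fun _ _ => rfl⟩
    · apply Subtype.ext
      funext i
      simp [Subgroup.inclusion]
  exact ⟨Equiv.ofBijective F₀ ⟨hinj, hsurj⟩, fun g => hF₀mk g⟩
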